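/- arXiv:1608.08930 — 2 statements merged into one kernel-verified Lean document; each statement's English description precedes it below -/
import Mathlib

section
/- Suppose the reference configuration is a phonon-stable equilibrium of E^a_hom and u^∞ ∈ 𝒰 satisfies ⟨δE^a(u^∞), v⟩ = 0 for all v ∈ 𝒰_0. Then there exists a function f : L → (ℝ^n)^R such that ⟨δ²E^a_hom(0)u^∞, v⟩ = Σ_{ξ∈L} Σ_{(ραβ)∈R} f_{(ραβ)}(ξ) · D_{(ραβ)}v(ξ) for all v ∈ 𝒰_0, and there is a constant C with |f(ξ)|_R ≤ C |Du^∞(ξ)|_R² for all ξ ∈ L with |ξ| ≥ R_def, where |g|_R² = Σ_{(ραβ)∈R} |g_{(ραβ)}|². -/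
open scoped BigOperators
noncomputable section

/-- Lattice indices: `ξ : Fin d → ℤ` labels the lattice site `F ξ ∈ F ℤ^d`. -/
abbrev ZLat (d : ℕ) := Fin d → ℤ

/-- Euclidean vectors. -/
abbrev Vec (m : ℕ) := EuclideanSpace ℝ (Fin m)

/-- Physical position of the lattice site with index `ξ`: `F ξ`. -/
def latpos {d : ℕ} (F : Matrix (Fin d) (Fin d) ℝ) (ξ : ZLat d) : Vec d :=
  WithLp.toLp 2 (fun i => ∑ j, F i j * (ξ j : ℝ))

/-- Embedding of `ℝ^d` into `ℝ^n` (`n = d` or `n = d+1`) by appending zeros. -/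
def embedV {d n : ℕ} (x : Vec d) : Vec n :=
  WithLp.toLp 2 (fun i : Fin n => if h : (i : ℕ) < d then x ⟨i, h⟩ else 0)

/-- The setting of a multilattice `⋃_α (F ℤ^d + p_α)` together with a finite
interaction range `R` and site potentials `V̂_ξ` (equal to a homogeneous
potential `V̂` outside the defect ball of radius `Rdef`). -/
structure MLSetting (d S n : ℕ) where
  hd : d = 2 ∨ d = 3
  hn : n = d ∨ (d = 2 ∧ n = d + 1)
  hS : 0 < S
  F : Matrix (Fin d) (Fin d) ℝ
  hdetF : F.det = 1
  p : Fin S → Vec d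
  hp0 : p ⟨0, hS⟩ = 0
  R : Finset (ZLat d × Fin S × Fin S)
  hR_noself : ∀ α : Fin S, ((0 : ZLat d), α, α) ∉ R
  hR_span : ∀ α : Fin S,
    Submodule.span ℝ {x : Vec d | ∃ ρ : ZLat d, (ρ, α, α) ∈ R ∧ x = latpos F ρ} = ⊤
  hR_pairs : ∀ α β : Fin S, α ≠ β → ((0 : ZLat d), α, β) ∈ R
  /-- the site potentials `V̂_ξ` -/
  Vsite : ZLat d → ((↥R → Vec n) → ℝ)
  /-- the homogeneous (defect-free) potential `V̂` -/
  Vhom : (↥R → Vec n) → ℝ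
  Rdef : ℝ
  hRdef : 0 < Rdef
  hVsite_hom : ∀ ξ : ZLat d, Rdef ≤ ‖latpos F ξ‖ → Vsite ξ = Vhom
  hV_smooth : ∀ ξ : ZLat d, ContDiff ℝ 4 (Vsite ξ)
  hVhom_smooth : ContDiff ℝ 4 Vhom
  hV_bdd : ∃ C : ℝ, ∀ (ξ : ZLat d) (g : ↥R → Vec n) (j : ℕ), j ≤ 4 →
      ‖iteratedFDeriv ℝ j (Vsite ξ) g‖ ≤ C
  hVhom_bdd : ∃ C : ℝ, ∀ (g : ↥R → Vec n) (j : ℕ), j ≤ 4 →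
      ‖iteratedFDeriv ℝ j Vhom g‖ ≤ C

/-- Multilattice displacements `u = (u_α(ξ))`. -/
abbrev Disp (d S n : ℕ) := ZLat d → Fin S → Vec n

namespace MLSetting

variable {d S n : ℕ} (A : MLSetting d S n)

/-- The index `α = 0` of the base species. -/
def idx0 : Fin S := ⟨0, A.hS⟩

/-- The reference finite differences `D y (ξ) = (F ρ + p_β - p_α)_{(ραβ) ∈ R}`
(independent of `ξ`). -/
def yvec : ↥A.R → Vec n :=
  fun e => embedV (latpos A.F e.1.1 + A.p e.1.2.2 - A.p e.1.2.1)

/-- Finite differences `D_{(ραβ)} u (ξ) = u_β(ξ+ρ) - u_α(ξ)`. -/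
def Dm (u : Disp d S n) (ξ : ZLat d) : ↥A.R → Vec n :=
  fun e => u (ξ + e.1.1) e.1.2.2 - u ξ e.1.2.1

/-- Square of the natural discrete energy norm `‖u‖_{a1}^2`. -/
def a1normSq (u : Disp d S n) : ℝ := ∑' ξ : ZLat d, ∑ e : ↥A.R, ‖A.Dm u ξ e‖ ^ 2

/-- The discrete energy norm `‖u‖_{a1}`. -/
def a1norm (u : Disp d S n) : ℝ := Real.sqrt (A.a1normSq u)

/-- Membership in the energy space `U` (finite energy norm). -/
def FiniteEnergy (u : Disp d S n) : Prop :=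
  Summable (fun ξ : ZLat d => ∑ e : ↥A.R, ‖A.Dm u ξ e‖ ^ 2)

/-- The projection `R_1` of the interaction range onto lattice directions. -/
def R1 : Finset (ZLat d) := A.R.image (fun e => e.1)

/-- Membership in the test space `U_0`: `D u_0` and `u_α - u_0` have compact
support. -/
def InU0 (u : Disp d S n) : Prop :=
  ∃ T : Finset (ZLat d), ∀ ξ : ZLat d, ξ ∉ T →
    (∀ ρ ∈ A.R1, u (ξ + ρ) A.idx0 = u ξ A.idx0) ∧ ∀ α : Fin S, u ξ α = u ξ A.idx0

/-- First variation `⟨δE^a(u), v⟩` of the atomistic energy. -/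
def dE (u v : Disp d S n) : ℝ :=
  ∑' ξ : ZLat d, fderiv ℝ (A.Vsite ξ) (A.yvec + A.Dm u ξ) (A.Dm v ξ)

/-- First variation `⟨δE^a_hom(u), v⟩` of the homogeneous energy. -/
def dEhom (u v : Disp d S n) : ℝ :=
  ∑' ξ : ZLat d, fderiv ℝ A.Vhom (A.yvec + A.Dm u ξ) (A.Dm v ξ)

/-- Second variation `⟨δ²E^a(u)v, w⟩`. -/
def d2E (u v w : Disp d S n) : ℝ :=
  ∑' ξ : ZLat d, iteratedFDeriv ℝ 2 (A.Vsite ξ) (A.yvec + A.Dm u ξ) ![A.Dm v ξ, A.Dm w ξ]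

/-- Second variation `⟨δ²E^a_hom(u)v, w⟩`. -/
def d2Ehom (u v w : Disp d S n) : ℝ :=
  ∑' ξ : ZLat d, iteratedFDeriv ℝ 2 A.Vhom (A.yvec + A.Dm u ξ) ![A.Dm v ξ, A.Dm w ξ]

/-- Phonon stability of the reference configuration: the reference state is an
equilibrium of `E^a_hom` and `δ²E^a_hom(0)` is coercive w.r.t. `‖·‖_{a1}`. -/
def PhononStable : Prop :=
  (∀ v : Disp d S n, A.InU0 v → A.dEhom 0 v = 0) ∧
  ∃ γ : ℝ, 0 < γ ∧ ∀ v : Disp d S n, A.InU0 v → γ * A.a1normSq v ≤ A.d2Ehom 0 v v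

end MLSetting

/-- Finite difference `D_ρ f(ξ) = f(ξ+ρ) - f(ξ)` of a lattice function. -/
def Dfd {d : ℕ} {E : Type*} [AddCommGroup E] (ρ : ZLat d) (f : ZLat d → E) : ZLat d → E :=
  fun ξ => f (ξ + ρ) - f ξ

/-- Iterated finite difference `D_{ρ⃗} = D_{ρ_1} ⋯ D_{ρ_j}`. -/
def DfdIter {d : ℕ} {E : Type*} [AddCommGroup E] :
    ∀ {j : ℕ}, (Fin j → ZLat d) → (ZLat d → E) → (ZLat d → E)
  | 0, _, f => f
  | (_ + 1), ρs, f => Dfd (ρs 0) (DfdIter (fun i => ρs i.succ) f)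

section Auxiliary

/-- Quadratic Taylor remainder bound for a `C²` map with bounded second
derivative. -/
lemma quad_taylor_bound {E F : Type*} [NormedAddCommGroup E] [NormedSpace ℝ E]
    [NormedAddCommGroup F] [NormedSpace ℝ F] {φ : E → F} {K : ℝ}
    (hφ : ContDiff ℝ 2 φ) (hK : ∀ x, ‖fderiv ℝ (fderiv ℝ φ) x‖ ≤ K) (hK0 : 0 ≤ K)
    (y g : E) : ‖φ (y + g) - φ y - fderiv ℝ φ y g‖ ≤ K * ‖g‖ ^ 2 := by
  have h1 : Differentiable ℝ φ := hφ.differentiable two_ne_zero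
  have h2 : Differentiable ℝ (fderiv ℝ φ) :=
    (hφ.fderiv_right (m := 1) (by norm_num)).differentiable one_ne_zero
  have hLip : ∀ x z : E, ‖fderiv ℝ φ x - fderiv ℝ φ z‖ ≤ K * ‖x - z‖ := by
    intro x z
    exact Convex.norm_image_sub_le_of_norm_fderiv_le (fun w _ => h2 w)
      (fun w _ => hK w) convex_univ (Set.mem_univ z) (Set.mem_univ x)
  have hmem : y + g ∈ Metric.closedBall y ‖g‖ := by
    simp [Metric.mem_closedBall, dist_eq_norm]
  have hbound : ∀ x ∈ Metric.closedBall y ‖g‖,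
      ‖fderiv ℝ φ x - fderiv ℝ φ y‖ ≤ K * ‖g‖ := by
    intro x hx
    calc ‖fderiv ℝ φ x - fderiv ℝ φ y‖ ≤ K * ‖x - y‖ := hLip x y
      _ ≤ K * ‖g‖ := by
          have : ‖x - y‖ ≤ ‖g‖ := by
            simpa [dist_eq_norm] using hx
          exact mul_le_mul_of_nonneg_left this hK0
  have := Convex.norm_image_sub_le_of_norm_fderiv_le' (f := φ)
    (fun x _ => (h1 x)) hbound (convex_closedBall y ‖g‖)
    (Metric.mem_closedBall_self (norm_nonneg g)) hmem
  simpa [add_sub_cancel_left, sq, mul_assoc] using this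

lemma norm_fderiv_fderiv_eq {E F : Type*} [NormedAddCommGroup E] [NormedSpace ℝ E]
    [NormedAddCommGroup F] [NormedSpace ℝ F] (φ : E → F) (x : E) :
    ‖fderiv ℝ (fderiv ℝ φ) x‖ = ‖iteratedFDeriv ℝ 2 φ x‖ := by
  calc ‖fderiv ℝ (fderiv ℝ φ) x‖
      = ‖iteratedFDeriv ℝ 0 (fderiv ℝ (fderiv ℝ φ)) x‖ :=
        (norm_iteratedFDeriv_zero (f := fderiv ℝ (fderiv ℝ φ)) (x := x)).symm
    _ = ‖iteratedFDeriv ℝ 1 (fderiv ℝ φ) x‖ := norm_iteratedFDeriv_fderiv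
    _ = ‖iteratedFDeriv ℝ 2 φ x‖ := norm_iteratedFDeriv_fderiv

namespace MLSetting

variable {d S n : ℕ} (A : MLSetting d S n)

/-- Continuous linear embedding of one component into the product. -/
def sngCLM (e : ↥A.R) : Vec n →L[ℝ] (↥A.R → Vec n) :=
  ContinuousLinearMap.pi (fun e' => if e' = e then ContinuousLinearMap.id ℝ (Vec n) else 0)

lemma sngCLM_apply (e : ↥A.R) (x : Vec n) : A.sngCLM e x = Pi.single e x := by
  funext e'
  by_cases h : e' = e <;>
    simp [sngCLM, ContinuousLinearMap.pi_apply, Pi.single_apply, h]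

lemma norm_sngCLM_le (e : ↥A.R) : ‖A.sngCLM e‖ ≤ 1 := by
  refine ContinuousLinearMap.opNorm_le_bound _ zero_le_one (fun x => ?_)
  rw [A.sngCLM_apply e x, Pi.norm_single, one_mul]

/-- The linear functional representing the linearized residual at site `ξ`. -/
def Lres (u : Disp d S n) (ξ : ZLat d) : (↥A.R → Vec n) →L[ℝ] ℝ :=
  fderiv ℝ (fderiv ℝ A.Vhom) A.yvec (A.Dm u ξ)
    - fderiv ℝ (A.Vsite ξ) (A.yvec + A.Dm u ξ) + fderiv ℝ A.Vhom A.yvec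

/-- The residual vector field `f`. -/
def fres (u : Disp d S n) (ξ : ZLat d) (e : ↥A.R) : Vec n :=
  (InnerProductSpace.toDual ℝ (Vec n)).symm ((A.Lres u ξ).comp (A.sngCLM e))

lemma fres_inner (u : Disp d S n) (ξ : ZLat d) (w : ↥A.R → Vec n) :
    ∑ e : ↥A.R, (inner ℝ (A.fres u ξ e) (w e) : ℝ) = A.Lres u ξ w := by
  have h : ∀ e : ↥A.R, (inner ℝ (A.fres u ξ e) (w e) : ℝ)
      = A.Lres u ξ (Pi.single e (w e)) := by
    intro e
    rw [show (inner ℝ (A.fres u ξ e) (w e) : ℝ)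
        = ((A.Lres u ξ).comp (A.sngCLM e)) (w e) from
      InnerProductSpace.toDual_symm_apply]
    rw [ContinuousLinearMap.comp_apply, A.sngCLM_apply]
  rw [Finset.sum_congr rfl (fun e _ => h e), ← map_sum, Finset.univ_sum_single]

lemma norm_fres_le (u : Disp d S n) (ξ : ZLat d) (e : ↥A.R) :
    ‖A.fres u ξ e‖ ≤ ‖A.Lres u ξ‖ := by
  rw [fres, LinearIsometryEquiv.norm_map]
  calc ‖(A.Lres u ξ).comp (A.sngCLM e)‖ ≤ ‖A.Lres u ξ‖ * ‖A.sngCLM e‖ :=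
        ContinuousLinearMap.opNorm_comp_le _ _
    _ ≤ ‖A.Lres u ξ‖ * 1 :=
        mul_le_mul_of_nonneg_left (A.norm_sngCLM_le e) (norm_nonneg _)
    _ = ‖A.Lres u ξ‖ := mul_one _

lemma Dm_zero (ξ : ZLat d) : A.Dm (0 : Disp d S n) ξ = 0 := by
  funext e; simp [Dm]

/-- Compact support of the finite differences of a test function. -/
lemma exists_finsupp_Dm {v : Disp d S n} (hv : A.InU0 v) :
    ∃ T' : Finset (ZLat d), ∀ ξ : ZLat d, ξ ∉ T' → A.Dm v ξ = 0 := by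
  obtain ⟨T, hT⟩ := hv
  classical
  refine ⟨T ∪ T.biUnion (fun t => A.R1.image (fun ρ => t - ρ)), fun ξ hξ => ?_⟩
  have hξT : ξ ∉ T := fun h => hξ (Finset.mem_union_left _ h)
  have hshift : ∀ ρ ∈ A.R1, ξ + ρ ∉ T := by
    intro ρ hρ hmem
    exact hξ (Finset.mem_union_right _ (Finset.mem_biUnion.2
      ⟨ξ + ρ, hmem, Finset.mem_image.2 ⟨ρ, hρ, by abel⟩⟩))
  funext e
  have hρ1 : e.1.1 ∈ A.R1 := Finset.mem_image.2 ⟨e.1, e.2, rfl⟩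
  have h1 := (hT ξ hξT).2 e.1.2.1
  have h2 := (hT (ξ + e.1.1) (hshift _ hρ1)).2 e.1.2.2
  have h3 := (hT ξ hξT).1 e.1.1 hρ1
  show A.Dm v ξ e = 0
  simp [Dm, h1, h2, h3]

end MLSetting

end Auxiliary

set_option synthInstance.maxHeartbeats 400000 in
/-- Theorem: linearized residual.
Suppose the reference configuration is a phonon-stable equilibrium of
`E^a_hom` and `u^∞ ∈ 𝒰` is an equilibrium of the defective energy `E^a`.
Then there is `f : L → (ℝ^n)^R` representing the linearized equation,
`⟨δ²E^a_hom(0)u^∞, v⟩ = Σ_ξ Σ_{(ραβ)∈R} f_{(ραβ)}(ξ) · D_{(ραβ)}v(ξ)` for all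
`v ∈ 𝒰_0`, with the quadratic residual bound
`|f(ξ)|_R ≤ C |Du^∞(ξ)|_R²` for `|ξ| ≥ R_def`. -/
theorem linearized_residual {d S n : ℕ} (A : MLSetting d S n)
    (hstab : A.PhononStable)
    (uinf : Disp d S n) (hfe : A.FiniteEnergy uinf)
    (hequi : ∀ v : Disp d S n, A.InU0 v → A.dE uinf v = 0) :
    ∃ f : ZLat d → (↥A.R → Vec n),
      (∀ v : Disp d S n, A.InU0 v →
        A.d2Ehom 0 uinf v
          = ∑' ξ : ZLat d, ∑ e : ↥A.R, (inner ℝ (f ξ e) (A.Dm v ξ e) : ℝ)) ∧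
      ∃ C : ℝ, ∀ ξ : ZLat d, A.Rdef ≤ ‖latpos A.F ξ‖ →
        Real.sqrt (∑ e : ↥A.R, ‖f ξ e‖ ^ 2)
          ≤ C * ∑ e : ↥A.R, ‖A.Dm uinf ξ e‖ ^ 2 := by
  classical
  obtain ⟨C3, hC3⟩ := A.hVhom_bdd
  refine ⟨A.fres uinf, ?_, ?_⟩
  · intro v hv
    obtain ⟨T', hDv⟩ := A.exists_finsupp_Dm hv
    have hz2 : ∀ ξ ∉ T',
        iteratedFDeriv ℝ 2 A.Vhom (A.yvec + A.Dm (0 : Disp d S n) ξ)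
          ![A.Dm uinf ξ, A.Dm v ξ] = 0 := fun ξ hξ =>
      ContinuousMultilinearMap.map_coord_zero _ 1 (by simp [hDv ξ hξ])
    have hsum2 : A.d2Ehom 0 uinf v = ∑ ξ ∈ T',
        fderiv ℝ (fderiv ℝ A.Vhom) A.yvec (A.Dm uinf ξ) (A.Dm v ξ) := by
      rw [show A.d2Ehom 0 uinf v = ∑' ξ, iteratedFDeriv ℝ 2 A.Vhom
          (A.yvec + A.Dm (0 : Disp d S n) ξ) ![A.Dm uinf ξ, A.Dm v ξ] from rfl,
        tsum_eq_sum hz2]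
      refine Finset.sum_congr rfl (fun ξ _ => ?_)
      rw [A.Dm_zero, add_zero, iteratedFDeriv_two_apply]
      simp
    have hzE : ∀ ξ ∉ T',
        fderiv ℝ (A.Vsite ξ) (A.yvec + A.Dm uinf ξ) (A.Dm v ξ) = 0 := by
      intro ξ hξ; rw [hDv ξ hξ]; exact map_zero _
    have hsumE : A.dE uinf v = ∑ ξ ∈ T',
        fderiv ℝ (A.Vsite ξ) (A.yvec + A.Dm uinf ξ) (A.Dm v ξ) := by
      rw [show A.dE uinf v = ∑' ξ, fderiv ℝ (A.Vsite ξ)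
          (A.yvec + A.Dm uinf ξ) (A.Dm v ξ) from rfl, tsum_eq_sum hzE]
    have hzh : ∀ ξ ∉ T',
        fderiv ℝ A.Vhom (A.yvec + A.Dm (0 : Disp d S n) ξ) (A.Dm v ξ) = 0 := by
      intro ξ hξ; rw [hDv ξ hξ]; exact map_zero _
    have hsumhom : A.dEhom 0 v = ∑ ξ ∈ T',
        fderiv ℝ A.Vhom A.yvec (A.Dm v ξ) := by
      rw [show A.dEhom 0 v = ∑' ξ, fderiv ℝ A.Vhom
          (A.yvec + A.Dm (0 : Disp d S n) ξ) (A.Dm v ξ) from rfl, tsum_eq_sum hzh]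
      exact Finset.sum_congr rfl (fun ξ _ => by rw [A.Dm_zero, add_zero])
    have hzr : ∀ ξ ∉ T',
        (∑ e : ↥A.R, (inner ℝ (A.fres uinf ξ e) (A.Dm v ξ e) : ℝ)) = 0 := by
      intro ξ hξ
      refine Finset.sum_eq_zero (fun e _ => ?_)
      have h0 : A.Dm v ξ e = 0 := by rw [hDv ξ hξ]; rfl
      rw [h0, inner_zero_right]
    have hrhs : (∑' ξ : ZLat d, ∑ e : ↥A.R, (inner ℝ (A.fres uinf ξ e) (A.Dm v ξ e) : ℝ))
        = ∑ ξ ∈ T', A.Lres uinf ξ (A.Dm v ξ) := by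
      rw [tsum_eq_sum hzr]
      exact Finset.sum_congr rfl (fun ξ _ => A.fres_inner uinf ξ (A.Dm v ξ))
    rw [hrhs]
    have hexp : ∀ ξ, A.Lres uinf ξ (A.Dm v ξ)
        = fderiv ℝ (fderiv ℝ A.Vhom) A.yvec (A.Dm uinf ξ) (A.Dm v ξ)
          - fderiv ℝ (A.Vsite ξ) (A.yvec + A.Dm uinf ξ) (A.Dm v ξ)
          + fderiv ℝ A.Vhom A.yvec (A.Dm v ξ) := by
      intro ξ
      simp [MLSetting.Lres, ContinuousLinearMap.add_apply, ContinuousLinearMap.sub_apply]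
    calc A.d2Ehom 0 uinf v
        = A.d2Ehom 0 uinf v - A.dE uinf v + A.dEhom 0 v := by
          rw [hequi v hv, hstab.1 v hv]; ring
      _ = ∑ ξ ∈ T', A.Lres uinf ξ (A.Dm v ξ) := by
          rw [hsum2, hsumE, hsumhom, ← Finset.sum_sub_distrib, ← Finset.sum_add_distrib]
          exact Finset.sum_congr rfl (fun ξ _ => (hexp ξ).symm)
  · set K : ℝ := max C3 0 with hKdef
    have hK0 : 0 ≤ K := le_max_right _ _
    have hG3 : ∀ x, ‖iteratedFDeriv ℝ 3 A.Vhom x‖ ≤ K := fun x =>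
      (hC3 x 3 (by norm_num)).trans (le_max_left _ _)
    refine ⟨(Fintype.card ↥A.R : ℝ) * K, fun ξ hξ => ?_⟩
    have hhom := A.hVsite_hom ξ hξ
    set g : ↥A.R → Vec n := A.Dm uinf ξ with hg
    have hLrw : A.Lres uinf ξ
        = -(fderiv ℝ A.Vhom (A.yvec + g) - fderiv ℝ A.Vhom A.yvec
            - fderiv ℝ (fderiv ℝ A.Vhom) A.yvec g) := by
      unfold MLSetting.Lres
      rw [hhom]; abel
    have hφ : ContDiff ℝ 2 (fderiv ℝ A.Vhom) :=
      A.hVhom_smooth.fderiv_right (by norm_num)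
    have hLnorm : ‖A.Lres uinf ξ‖ ≤ K * ‖g‖ ^ 2 := by
      rw [hLrw, norm_neg]
      exact quad_taylor_bound hφ (fun x => (norm_fderiv_fderiv_eq (fderiv ℝ A.Vhom) x).trans_le
        ((norm_iteratedFDeriv_fderiv (n := 2)).trans_le (hG3 x))) hK0 A.yvec g
    have hgsq : ‖g‖ ^ 2 ≤ ∑ e : ↥A.R, ‖g e‖ ^ 2 := by
      have h1 : ‖g‖ ≤ Real.sqrt (∑ e : ↥A.R, ‖g e‖ ^ 2) := by
        refine (pi_norm_le_iff_of_nonneg (Real.sqrt_nonneg _)).2 (fun e => ?_)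
        have h2 : ‖g e‖ ^ 2 ≤ ∑ e' : ↥A.R, ‖g e'‖ ^ 2 :=
          Finset.single_le_sum (f := fun e' : ↥A.R => ‖g e'‖ ^ 2) (fun e' _ => sq_nonneg _) (Finset.mem_univ e)
        calc ‖g e‖ = Real.sqrt (‖g e‖ ^ 2) := (Real.sqrt_sq (norm_nonneg _)).symm
          _ ≤ Real.sqrt (∑ e' : ↥A.R, ‖g e'‖ ^ 2) := Real.sqrt_le_sqrt h2
      calc ‖g‖ ^ 2 ≤ Real.sqrt (∑ e : ↥A.R, ‖g e‖ ^ 2) ^ 2 :=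
            pow_le_pow_left₀ (norm_nonneg _) h1 2
        _ = ∑ e : ↥A.R, ‖g e‖ ^ 2 :=
            Real.sq_sqrt (Finset.sum_nonneg fun e _ => sq_nonneg _)
    calc Real.sqrt (∑ e : ↥A.R, ‖A.fres uinf ξ e‖ ^ 2)
        ≤ ∑ e : ↥A.R, ‖A.fres uinf ξ e‖ := by
          have hsq := Finset.sum_sq_le_sq_sum_of_nonneg
            (s := (Finset.univ : Finset ↥A.R))
            (f := fun e : ↥A.R => ‖A.fres uinf ξ e‖) (fun e _ => norm_nonneg _)
          calc Real.sqrt (∑ e : ↥A.R, ‖A.fres uinf ξ e‖ ^ 2)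
              ≤ Real.sqrt ((∑ e : ↥A.R, ‖A.fres uinf ξ e‖) ^ 2) := Real.sqrt_le_sqrt hsq
            _ = ∑ e : ↥A.R, ‖A.fres uinf ξ e‖ :=
                Real.sqrt_sq (Finset.sum_nonneg fun e _ => norm_nonneg _)
      _ ≤ ∑ _e : ↥A.R, ‖A.Lres uinf ξ‖ :=
          Finset.sum_le_sum (fun e _ => A.norm_fres_le uinf ξ e)
      _ = (Fintype.card ↥A.R : ℝ) * ‖A.Lres uinf ξ‖ := by
          rw [Finset.sum_const, Finset.card_univ, nsmul_eq_mul]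
      _ ≤ (Fintype.card ↥A.R : ℝ) * (K * ‖g‖ ^ 2) :=
          mul_le_mul_of_nonneg_left hLnorm (by positivity)
      _ ≤ (Fintype.card ↥A.R : ℝ) * (K * ∑ e : ↥A.R, ‖g e‖ ^ 2) := by
          refine mul_le_mul_of_nonneg_left ?_ (by positivity)
          exact mul_le_mul_of_nonneg_left hgsq hK0
      _ = (Fintype.card ↥A.R : ℝ) * K * ∑ e : ↥A.R, ‖A.Dm uinf ξ e‖ ^ 2 := by
          rw [hg]; ring
end
end

section
/- Let Ω = (−1/2, 1/2]^d, let N ∈ ℕ, ε = 1/N, and Ω_ε = {−1/2+ε, −1/2+2ε, …, 1/2}^d. For periodic fields U ∈ C³(Ω, ℝ^n) and p_α ∈ C²(Ω, ℝ^n), define the atomistic fields u^ε_α(ξ) = U(ξ) + ε p_α(ξ) for ξ ∈ Ω_ε. Then there is a constant C, independent of ε, such that |E^a_ε(u^ε) − E^c_Ω(U, p)| ≤ C ε, where E^a_ε(u^ε) = ε^d Σ_{ξ∈Ω_ε} V_ξ(D^ε u^ε(ξ)) with D^ε_{(ραβ)}u^ε(ξ) = (u^ε_β(ξ+ερ) −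 u^ε_α(ξ))/ε (interpreted periodically), and E^c_Ω(U, p) = ∫_Ω V((∇_ρ U(x) + p_β(x) − p_α(x))_{(ραβ)∈R}) dx. -/
open scoped BigOperators
noncomputable section

namespace MLSetting

variable {d S n : ℕ} (A : MLSetting d S n)

/-- The Cauchy–Born strain `((∇U)ρ + p_β − p_α)_{(ραβ)∈R}` at the point `x`. -/
def cbStrain (Z : Vec d → Vec n) (q : Fin S → Vec d → Vec n) (x : Vec d) :
    ↥A.R → Vec n :=
  fun e => fderiv ℝ Z x (latpos A.F e.1.1) + q e.1.2.2 x - q e.1.2.1 x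

/-- The scaled finite differences
`D^ε_{(ραβ)} u^ε(x) = (u^ε_β(x + ερ) − u^ε_α(x))/ε`, `ε = 1/N`, of the
atomistic fields `u^ε_α = U + ε q_α` obtained from continuum fields. -/
def Deps (N : ℕ) (U : Vec d → Vec n) (q : Fin S → Vec d → Vec n) (x : Vec d) :
    ↥A.R → Vec n :=
  fun e =>
    (N : ℝ) •
      ((U (x + (N : ℝ)⁻¹ • latpos A.F e.1.1)
          + (N : ℝ)⁻¹ • q e.1.2.2 (x + (N : ℝ)⁻¹ • latpos A.F e.1.1))
        - (U x + (N : ℝ)⁻¹ • q e.1.2.1 x))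

end MLSetting

/-- The index set of the scaled atomistic domain
`Ω_ε = {-1/2+ε, …, 1/2}^d`, `ε = 1/N`. -/
def gridSet (d : ℕ) (N : ℕ) : Finset (ZLat d) :=
  Finset.Icc (fun _ => 1) (fun _ => (N : ℤ))

/-- The point `(-1/2 + ε z_1, …, -1/2 + ε z_d)` of `Ω_ε`, `ε = 1/N`. -/
def gridPt {d : ℕ} (N : ℕ) (z : ZLat d) : Vec d :=
  WithLp.toLp 2 (fun i => -(1 / 2 : ℝ) + (z i : ℝ) / (N : ℝ))

/-- The continuum domain `Ω = (-1/2, 1/2]^d`. -/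
def cubeΩ (d : ℕ) : Set (Vec d) :=
  {x : Vec d | ∀ i, x i ∈ Set.Ioc (-(1 / 2 : ℝ)) (1 / 2 : ℝ)}

/-- The integer vector `m` as an element of `ℝ^d`. -/
def intVec {d : ℕ} (m : ZLat d) : Vec d := WithLp.toLp 2 (fun i => (m i : ℝ))

/-- `1`-periodicity (in each coordinate) of a continuum field. -/
def ZPeriodic {d n : ℕ} (U : Vec d → Vec n) : Prop :=
  ∀ (x : Vec d) (m : ZLat d), U (x + intVec m) = U x

namespace MLSetting

variable {d S n : ℕ} (A : MLSetting d S n)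

/-- The scaled atomistic energy
`E^a_ε(u^ε) = ε^d Σ_{ξ∈Ω_ε} V_ξ(D^ε u^ε(ξ))`, `ε = 1/N`, evaluated on the
atomistic fields `u^ε_α = U + ε q_α`. -/
def Eaeps (N : ℕ) (U : Vec d → Vec n) (q : Fin S → Vec d → Vec n) : ℝ :=
  ((N : ℝ)⁻¹) ^ d *
    ∑ z ∈ gridSet d N,
      (A.Vsite z (A.yvec + A.Deps N U q (gridPt N z)) - A.Vhom A.yvec)

/-- The Cauchy–Born energy on `Ω`:
`E^c_Ω(U,p) = ∫_Ω V((∇_ρ U + p_β − p_α)_{(ραβ)∈R}) dx`. -/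
def EcΩ (U : Vec d → Vec n) (q : Fin S → Vec d → Vec n) : ℝ :=
  ∫ x in cubeΩ d, (A.Vhom (A.yvec + A.cbStrain U q x) - A.Vhom A.yvec)

/-- The second variation `⟨δ²E^a_ε(0) z^ε, z^ε⟩` of the scaled atomistic
energy at the reference state, on the fields `z^ε_α = Z + ε q_α`. -/
def d2Eaeps (N : ℕ) (Z : Vec d → Vec n) (q : Fin S → Vec d → Vec n) : ℝ :=
  ((N : ℝ)⁻¹) ^ d *
    ∑ z ∈ gridSet d N,
      iteratedFDeriv ℝ 2 (A.Vsite z) A.yvec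
        ![A.Deps N Z q (gridPt N z), A.Deps N Z q (gridPt N z)]

/-- The second variation `⟨δ²E^c_Ω(0)(Z,q), (Z,q)⟩` of the Cauchy–Born
energy on `Ω` at the reference state. -/
def d2EcΩ (Z : Vec d → Vec n) (q : Fin S → Vec d → Vec n) : ℝ :=
  ∫ x in cubeΩ d,
    iteratedFDeriv ℝ 2 A.Vhom A.yvec ![A.cbStrain Z q x, A.cbStrain Z q x]

end MLSetting

section AuxConsistency

open MeasureTheory

theorem CBaux.fderiv_periodic_shift {E F' : Type*} [NormedAddCommGroup E] [NormedSpace ℝ E]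
    [NormedAddCommGroup F'] [NormedSpace ℝ F']
    {f : E → F'} (hf : Differentiable ℝ f) (c : E) (h : ∀ x, f (x + c) = f x) (x : E) :
    fderiv ℝ f (x + c) = fderiv ℝ f x := by
  have h1 : HasFDerivAt (fun y => f (y + c)) (fderiv ℝ f (x + c)) x := by
    have := (hf (x + c)).hasFDerivAt.comp x ((hasFDerivAt_id x).add_const c)
    simpa [Function.comp_def] using this
  have h2 : (fun y => f (y + c)) = f := funext h
  rw [h2] at h1
  rw [← h1.fderiv]

theorem CBaux.lip_of_fderiv_bound {E F' : Type*} [NormedAddCommGroup E] [NormedSpace ℝ E]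
    [NormedAddCommGroup F'] [NormedSpace ℝ F']
    {f : E → F'} (hf : Differentiable ℝ f) {M : ℝ} (hM : ∀ x, ‖fderiv ℝ f x‖ ≤ M) (x y : E) :
    ‖f y - f x‖ ≤ M * ‖y - x‖ :=
  (convex_univ : Convex ℝ (Set.univ : Set E)).norm_image_sub_le_of_norm_fderiv_le
    (fun z _ => hf z) (fun z _ => hM z) trivial trivial

theorem CBaux.coord_le_norm {d : ℕ} (x : Vec d) (i : Fin d) : |x i| ≤ ‖x‖ := by
  rw [EuclideanSpace.norm_eq]
  calc |x i| = Real.sqrt (‖x i‖^2) := by rw [Real.sqrt_sq_eq_abs]; simp [Real.norm_eq_abs]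
  _ ≤ _ := Real.sqrt_le_sqrt (Finset.single_le_sum (f := fun j => ‖x j‖^2)
      (fun j _ => sq_nonneg _) (Finset.mem_univ i))

theorem CBaux.vecnorm_le {d : ℕ} (x : Vec d) {c : ℝ} (hc : 0 ≤ c) (h : ∀ i, |x i| ≤ c) :
    ‖x‖ ≤ d * c := by
  rw [EuclideanSpace.norm_eq]
  calc Real.sqrt (∑ i : Fin d, ‖x i‖^2) ≤ Real.sqrt (∑ _i : Fin d, c^2) := by
        apply Real.sqrt_le_sqrt
        apply Finset.sum_le_sum
        intro i _
        rw [Real.norm_eq_abs]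
        exact pow_le_pow_left₀ (abs_nonneg _) (h i) 2
  _ = Real.sqrt (d * c^2) := by rw [Finset.sum_const]; simp [mul_comm]
  _ ≤ Real.sqrt ((d*c)^2) := by
        apply Real.sqrt_le_sqrt; rw [mul_pow]
        have : (d:ℝ) ≤ (d:ℝ)^2 := by exact_mod_cast Nat.le_self_pow two_ne_zero d
        nlinarith [sq_nonneg c]
  _ = d * c := Real.sqrt_sq (by positivity)

theorem CBaux.periodic_bound {d : ℕ} {f : Vec d → ℝ} (hc : Continuous f)
    (hper : ∀ (x : Vec d) (m : ZLat d), f (x + intVec m) = f x) :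
    ∃ C : ℝ, 0 ≤ C ∧ ∀ x, f x ≤ C := by
  obtain ⟨z, -, hz⟩ := (isCompact_closedBall (0 : Vec d) d).exists_isMaxOn
    ⟨0, by simp⟩ hc.continuousOn
  refine ⟨max (f z) 0, le_max_right _ _, fun x => ?_⟩
  set m : ZLat d := fun i => -⌊x i⌋ with hm
  have hx : f x = f (x + intVec m) := (hper x m).symm
  have hball : x + intVec m ∈ Metric.closedBall (0 : Vec d) d := by
    rw [Metric.mem_closedBall, dist_zero_right]
    have habs : ∀ i : Fin d, |(x + intVec m) i| ≤ 1 := by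
      intro i
      have h1 : (x + intVec m) i = Int.fract (x i) := by
        have : (x + intVec m) i = x i + (m i : ℝ) := rfl
        rw [this, hm, Int.fract]
        push_cast
        ring
      rw [h1, abs_of_nonneg (Int.fract_nonneg _)]
      exact (Int.fract_lt_one _).le
    have := CBaux.vecnorm_le _ zero_le_one habs
    simpa using this
  rw [hx]
  exact le_max_of_le_left (hz hball)

/-- The half-open cube cell of the grid with upper corner `gridPt N z`. -/
def CBcell (d N : ℕ) (z : ZLat d) : Set (Vec d) :=
  {x : Vec d | ∀ i, x i ∈ Set.Ioc (-(1/2 : ℝ) + ((z i : ℝ)-1)/N) (-(1/2 : ℝ) + (z i : ℝ)/N)}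

theorem CBcell_eq_preimage (d N : ℕ) (z : ZLat d) :
    CBcell d N z = (MeasurableEquiv.toLp 2 (Fin d → ℝ)).symm ⁻¹'
      (Set.univ.pi fun i => Set.Ioc (-(1/2 : ℝ) + ((z i : ℝ)-1)/N) (-(1/2 : ℝ) + (z i : ℝ)/N)) := by
  ext x; simp [CBcell, Set.mem_pi]

theorem measurableSet_CBcell (d N : ℕ) (z : ZLat d) : MeasurableSet (CBcell d N z) := by
  rw [CBcell_eq_preimage]
  exact (MeasurableEquiv.toLp 2 (Fin d → ℝ)).symm.measurable
    (MeasurableSet.univ_pi fun i => measurableSet_Ioc)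

theorem volume_CBcell {d N : ℕ} (hN : 0 < N) (z : ZLat d) :
    MeasureTheory.volume (CBcell d N z) = ENNReal.ofReal (((N:ℝ)⁻¹)^d) := by
  rw [CBcell_eq_preimage,
    (EuclideanSpace.volume_preserving_symm_measurableEquiv_toLp (Fin d)).measure_preimage
      (MeasurableSet.univ_pi fun i => measurableSet_Ioc).nullMeasurableSet]
  rw [MeasureTheory.volume_pi_pi]
  have : ∀ i : Fin d, MeasureTheory.volume
      (Set.Ioc (-(1/2 : ℝ) + ((z i : ℝ)-1)/N) (-(1/2 : ℝ) + (z i : ℝ)/N))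
        = ENNReal.ofReal ((N:ℝ)⁻¹) := by
    intro i
    rw [Real.volume_Ioc]
    congr 1
    field_simp
    ring
  simp only [this]
  rw [Finset.prod_const, ← ENNReal.ofReal_pow (by positivity)]
  simp

theorem mem_CBcell_iff {d N : ℕ} (hN : 0 < N) (z : ZLat d) (x : Vec d) :
    x ∈ CBcell d N z ↔ ∀ i, ⌈(x i + 1/2) * N⌉ = z i := by
  have hNR : (0:ℝ) < N := by exact_mod_cast hN
  unfold CBcell
  simp only [Set.mem_setOf_eq, Set.mem_Ioc]
  refine forall_congr' fun i => ?_
  rw [Int.ceil_eq_iff]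
  constructor
  · rintro ⟨h1, h2⟩
    refine ⟨?_, ?_⟩
    · have := (div_lt_iff₀ hNR).mp (by linarith : ((z i : ℝ) - 1)/N < x i + 1/2)
      push_cast
      linarith
    · have := (le_div_iff₀ hNR).mp (by linarith : x i + 1/2 ≤ (z i : ℝ)/N)
      push_cast
      linarith
  · rintro ⟨h1, h2⟩
    push_cast at h1 h2
    refine ⟨?_, ?_⟩
    · have := (div_lt_iff₀ hNR).mpr h1
      linarith
    · have := (le_div_iff₀ hNR).mpr h2
      linarith

theorem cube_eq_biUnion_CBcell {d N : ℕ} (hN : 0 < N) :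
    cubeΩ d = ⋃ z ∈ gridSet d N, CBcell d N z := by
  have hNR : (0:ℝ) < N := by exact_mod_cast hN
  ext x
  simp only [Set.mem_iUnion, exists_prop]
  constructor
  · intro hx
    refine ⟨fun i => ⌈(x i + 1/2) * N⌉, ?_, (mem_CBcell_iff hN _ x).mpr fun i => rfl⟩
    rw [gridSet, Finset.mem_Icc]
    constructor <;> intro i
    · have hpos : (0:ℝ) < (x i + 1/2) * N := by
        have := (hx i).1; nlinarith
      exact Int.ceil_pos.mpr hpos
    · apply Int.ceil_le.mpr
      have := (hx i).2
      push_cast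
      nlinarith
  · rintro ⟨z, hz, hcell⟩
    rw [gridSet, Finset.mem_Icc] at hz
    intro i
    have h1 := (hcell i).1
    have h2 := (hcell i).2
    have hz1 : (1:ℝ) ≤ (z i : ℝ) := by exact_mod_cast hz.1 i
    have hz2 : (z i : ℝ) ≤ N := by exact_mod_cast hz.2 i
    constructor
    · have : (0:ℝ) ≤ ((z i : ℝ) - 1)/N := by
        apply div_nonneg (by linarith) hNR.le
      linarith
    · have : (z i : ℝ)/N ≤ 1 := by
        rw [div_le_one hNR]; exact hz2
      linarith

theorem CBcell_disjoint {d N : ℕ} (hN : 0 < N) :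
    (↑(gridSet d N) : Set (ZLat d)).PairwiseDisjoint (CBcell d N) := by
  intro z _ z' _ hne
  rw [Function.onFun, Set.disjoint_left]
  intro x hx hx'
  exact hne (funext fun i =>
    ((mem_CBcell_iff hN z x).mp hx i).symm.trans ((mem_CBcell_iff hN z' x).mp hx' i))

theorem gridPt_mem_CBcell {d N : ℕ} (hN : 0 < N) (z : ZLat d) : gridPt N z ∈ CBcell d N z := by
  have hNR : (0:ℝ) < N := by exact_mod_cast hN
  intro i
  unfold gridPt
  constructor
  · have : ((z i : ℝ) - 1)/N < (z i : ℝ)/N := by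
      rw [div_lt_div_iff₀ hNR hNR]; nlinarith
    linarith
  · exact le_refl _

theorem dist_gridPt_CBcell {d N : ℕ} (hN : 0 < N) {z : ZLat d} {x : Vec d}
    (hx : x ∈ CBcell d N z) : ‖x - gridPt N z‖ ≤ d * (N:ℝ)⁻¹ := by
  have hNR : (0:ℝ) < N := by exact_mod_cast hN
  apply CBaux.vecnorm_le _ (by positivity)
  intro i
  have h1 := (hx i).1
  have h2 := (hx i).2
  have hgi : gridPt N z i = -(1/2 : ℝ) + (z i : ℝ)/N := rfl
  have hsub : (x - gridPt N z) i = x i - gridPt N z i := rfl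
  rw [hsub, hgi, abs_le]
  have : ((z i : ℝ) - 1)/N = (z i:ℝ)/N - (N:ℝ)⁻¹ := by field_simp
  constructor <;> rw [inv_eq_one_div] at * <;> nlinarith [this]

theorem CBaux.defect_finset {d : ℕ} (F : Matrix (Fin d) (Fin d) ℝ) (hdet : F.det = 1) (Rdef : ℝ) :
    ∃ T : Finset (ZLat d), ∀ ξ : ZLat d, ‖latpos F ξ‖ < Rdef → ξ ∈ T := by
  set G := F⁻¹ with hG
  have hGF : G * F = 1 := Matrix.nonsing_inv_mul F (by rw [hdet]; exact isUnit_one)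
  set c : ℝ := ∑ i, ∑ j, |G i j| with hc
  have hc0 : 0 ≤ c := Finset.sum_nonneg fun i _ => Finset.sum_nonneg fun j _ => abs_nonneg _
  set M : ℤ := ⌈c * Rdef⌉ + 1 with hM
  refine ⟨Finset.Icc (fun _ => -M) (fun _ => M), fun ξ hξ => ?_⟩
  have hR0 : 0 ≤ Rdef := le_trans (norm_nonneg _) hξ.le
  have key : ∀ i, (ξ i : ℝ) = ∑ j, G i j * (latpos F ξ j) := by
    intro i
    unfold latpos
    simp_rw [Finset.mul_sum]
    rw [Finset.sum_comm]
    have hk : ∀ k, ∑ j, G i j * (F j k * (ξ k : ℝ)) = ((G*F) i k) * (ξ k : ℝ) := by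
      intro k
      rw [Matrix.mul_apply, Finset.sum_mul]
      exact Finset.sum_congr rfl fun j _ => (mul_assoc _ _ _).symm
    simp_rw [hk, hGF, Matrix.one_apply]
    simp
  have habs : ∀ i, |(ξ i : ℝ)| ≤ c * Rdef := by
    intro i
    rw [key i]
    calc |∑ j, G i j * latpos F ξ j| ≤ ∑ j, |G i j * latpos F ξ j| :=
          Finset.abs_sum_le_sum_abs _ _
    _ ≤ ∑ j, |G i j| * Rdef := by
        apply Finset.sum_le_sum
        intro j _
        rw [abs_mul]
        have h1 := (CBaux.coord_le_norm (latpos F ξ) j).trans hξ.le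
        exact mul_le_mul_of_nonneg_left h1 (abs_nonneg _)
    _ = (∑ j, |G i j|) * Rdef := by rw [Finset.sum_mul]
    _ ≤ c * Rdef := by
        apply mul_le_mul_of_nonneg_right ?_ hR0
        exact Finset.single_le_sum (f := fun i => ∑ j, |G i j|)
          (fun i _ => Finset.sum_nonneg fun j _ => abs_nonneg _) (Finset.mem_univ i)
  rw [Finset.mem_Icc]
  constructor <;> intro i <;>
  · have h := habs i
    have h2 : |(ξ i : ℝ)| ≤ (M : ℝ) := by
      push_cast [hM]
      calc |(ξ i : ℝ)| ≤ c * Rdef := h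
      _ ≤ ⌈c * Rdef⌉ := Int.le_ceil _
      _ ≤ ⌈c * Rdef⌉ + 1 := by linarith
    rw [abs_le] at h2
    first
    | exact_mod_cast h2.1
    | exact_mod_cast h2.2

theorem CBaux.taylor_bound {E F' : Type*} [NormedAddCommGroup E] [NormedSpace ℝ E]
    [NormedAddCommGroup F'] [NormedSpace ℝ F']
    {U : E → F'} (hU : Differentiable ℝ U) {M : ℝ} (hM : 0 ≤ M)
    (hlip : ∀ x y, ‖fderiv ℝ U y - fderiv ℝ U x‖ ≤ M * ‖y - x‖) (y w : E) :
    ‖U (y + w) - U y - fderiv ℝ U y w‖ ≤ M * ‖w‖ * ‖w‖ := by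
  have hgd : ∀ z, DifferentiableAt ℝ (fun z' => U z' - fderiv ℝ U y z') z := fun z =>
    (hU z).sub (fderiv ℝ U y).differentiableAt
  have hgderiv : ∀ z, fderiv ℝ (fun z' => U z' - fderiv ℝ U y z') z
      = fderiv ℝ U z - fderiv ℝ U y := by
    intro z
    rw [fderiv_fun_sub (hU z) (fderiv ℝ U y).differentiableAt, (fderiv ℝ U y).fderiv]
  have key := (convex_closedBall y ‖w‖).norm_image_sub_le_of_norm_fderiv_le
    (f := fun z' => U z' - fderiv ℝ U y z') (fun z _ => hgd z)
    (fun z hz => by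
      rw [hgderiv z]
      calc ‖fderiv ℝ U z - fderiv ℝ U y‖ ≤ M * ‖z - y‖ := hlip y z
      _ ≤ M * ‖w‖ := mul_le_mul_of_nonneg_left
          (by rwa [← dist_eq_norm, ← Metric.mem_closedBall]) hM)
    (Metric.mem_closedBall_self (norm_nonneg _))
    (by rw [Metric.mem_closedBall, dist_eq_norm, add_sub_cancel_left])
  have h1 : (U (y + w) - fderiv ℝ U y (y + w)) - (U y - fderiv ℝ U y y)
      = U (y + w) - U y - fderiv ℝ U y w := by
    rw [sub_sub_sub_comm, ← (fderiv ℝ U y).map_sub]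
    have h0 : y + w - y = w := by abel
    rw [h0]
  have h2 : ‖y + w - y‖ = ‖w‖ := by congr 1; abel
  rw [← h1]
  calc ‖(U (y + w) - fderiv ℝ U y (y + w)) - (U y - fderiv ℝ U y y)‖
      ≤ M * ‖w‖ * ‖y + w - y‖ := key
  _ = M * ‖w‖ * ‖w‖ := by rw [h2]

theorem card_gridSet (d N : ℕ) : (gridSet d N).card = N^d := by
  rw [gridSet, Pi.card_Icc]
  simp [Int.card_Icc]

end AuxConsistency

set_option maxHeartbeats 1600000 in
/-- Lemma: first-order consistency of the Cauchy–Born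
energy.  For periodic fields `U ∈ C³(Ω, ℝ^n)`, `p_α ∈ C²(Ω, ℝ^n)` and the
atomistic fields `u^ε_α = U + ε p_α`, `ε = 1/N`, there is a constant `C`,
independent of `ε`, with `|E^a_ε(u^ε) − E^c_Ω(U,p)| ≤ C ε`. -/
theorem cauchy_born_energy_consistency {d S n : ℕ} (A : MLSetting d S n)
    (U : Vec d → Vec n) (q : Fin S → Vec d → Vec n)
    (hU : ContDiff ℝ 3 U) (hq : ∀ α, ContDiff ℝ 2 (q α))
    (hUper : ZPeriodic U) (hqper : ∀ α, ZPeriodic (q α)) :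
    ∃ C : ℝ, ∀ N : ℕ, 0 < N →
      |A.Eaeps N U q - A.EcΩ U q| ≤ C * (N : ℝ)⁻¹ := by
  classical
  obtain ⟨Cv0, hCv0⟩ := A.hVhom_bdd
  obtain ⟨Cs0, hCs0⟩ := A.hV_bdd
  set Cv : ℝ := max Cv0 0 with hCvdef
  set Cs : ℝ := max Cs0 0 with hCsdef
  have hCv' : ∀ (g : ↥A.R → Vec n) (j : ℕ), j ≤ 4 → ‖iteratedFDeriv ℝ j A.Vhom g‖ ≤ Cv :=
    fun g j hj => le_max_of_le_left (hCv0 g j hj)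
  have hCs' : ∀ (ξ : ZLat d) (g : ↥A.R → Vec n) (j : ℕ), j ≤ 4 →
      ‖iteratedFDeriv ℝ j (A.Vsite ξ) g‖ ≤ Cs :=
    fun ξ g j hj => le_max_of_le_left (hCs0 ξ g j hj)
  have hCv_nonneg : 0 ≤ Cv := le_max_right _ _
  have hCs_nonneg : 0 ≤ Cs := le_max_right _ _
  have hd1 : 1 ≤ d := by rcases A.hd with h | h <;> omega
  -- global bound on Vhom and its Lipschitz property
  have hVdiff : Differentiable ℝ A.Vhom := A.hVhom_smooth.differentiable (by norm_num)
  have hVderiv_bound : ∀ g, ‖fderiv ℝ A.Vhom g‖ ≤ Cv := by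
    intro g
    have h1 : ‖fderiv ℝ A.Vhom g‖ = ‖iteratedFDeriv ℝ 1 A.Vhom g‖ := by
      rw [← norm_iteratedFDeriv_fderiv (n := 0), norm_iteratedFDeriv_zero]
    rw [h1]
    exact hCv' g 1 (by norm_num)
  have hVlip : ∀ g g' : ↥A.R → Vec n, ‖A.Vhom g - A.Vhom g'‖ ≤ Cv * ‖g - g'‖ :=
    fun g g' => CBaux.lip_of_fderiv_bound hVdiff hVderiv_bound g' g
  have hVbound : ∀ g, |A.Vhom g| ≤ Cv := by
    intro g
    have := hCv' g 0 (by norm_num)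
    rwa [norm_iteratedFDeriv_zero, Real.norm_eq_abs] at this
  have hVsbound : ∀ ξ g, |A.Vsite ξ g| ≤ Cs := by
    intro ξ g
    have := hCs' ξ g 0 (by norm_num)
    rwa [norm_iteratedFDeriv_zero, Real.norm_eq_abs] at this
  -- derivative fields of U
  set F1 : Vec d → (Vec d →L[ℝ] Vec n) := fderiv ℝ U with hF1def
  have hUdiff : Differentiable ℝ U := hU.differentiable (by norm_num)
  have hF1 : ContDiff ℝ 2 F1 := hU.fderiv_right (by norm_num)
  have hF1per : ∀ (x : Vec d) (m : ZLat d), F1 (x + intVec m) = F1 x :=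
    fun x m => CBaux.fderiv_periodic_shift hUdiff _ (fun y => hUper y m) x
  have hF1diff : Differentiable ℝ F1 := hF1.differentiable (by norm_num)
  obtain ⟨M2, hM2n, hM2⟩ := CBaux.periodic_bound (f := fun x => ‖fderiv ℝ F1 x‖)
    ((hF1.fderiv_right (m := 1) (by norm_num)).continuous.norm)
    (fun x m => congrArg norm (CBaux.fderiv_periodic_shift hF1diff _ (fun y => hF1per y m) x))
  have hF1lip : ∀ x y : Vec d, ‖F1 y - F1 x‖ ≤ M2 * ‖y - x‖ :=
    CBaux.lip_of_fderiv_bound hF1diff hM2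
  -- Lipschitz bounds for the shift fields q
  have hqdiff : ∀ α, Differentiable ℝ (q α) := fun α => (hq α).differentiable (by norm_num)
  have hLqex : ∀ α : Fin S, ∃ L : ℝ, 0 ≤ L ∧ ∀ x, ‖fderiv ℝ (q α) x‖ ≤ L := fun α =>
    CBaux.periodic_bound (f := fun x => ‖fderiv ℝ (q α) x‖)
      (((hq α).fderiv_right (m := 1) (by norm_num)).continuous.norm)
      (fun x m => congrArg norm (CBaux.fderiv_periodic_shift (hqdiff α) _ (fun y => hqper α y m) x))
  choose Lq hLq0 hLqb using hLqex
  set LqS : ℝ := ∑ α : Fin S, Lq α with hLqSdef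
  have hLqS0 : 0 ≤ LqS := Finset.sum_nonneg fun α _ => hLq0 α
  have hLqS : ∀ α, Lq α ≤ LqS := fun α =>
    Finset.single_le_sum (f := Lq) (fun β _ => hLq0 β) (Finset.mem_univ α)
  have hqlip : ∀ (α : Fin S) (x y : Vec d), ‖q α y - q α x‖ ≤ LqS * ‖y - x‖ := fun α x y =>
    CBaux.lip_of_fderiv_bound (hqdiff α) (fun w => (hLqb α w).trans (hLqS α)) x y
  -- geometric constants
  set Rm : ℝ := ∑ e : ↥A.R, ‖latpos A.F e.1.1‖ with hRmdef
  have hRm0 : 0 ≤ Rm := Finset.sum_nonneg fun e _ => norm_nonneg _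
  have hRm : ∀ e : ↥A.R, ‖latpos A.F e.1.1‖ ≤ Rm := fun e =>
    Finset.single_le_sum (f := fun e : ↥A.R => ‖latpos A.F e.1.1‖)
      (fun e _ => norm_nonneg _) (Finset.mem_univ e)
  set Cst : ℝ := M2*Rm*Rm + M2*d*Rm + LqS*(d + Rm) + LqS*d with hCstdef
  have hCst0 : 0 ≤ Cst := by positivity
  obtain ⟨T, hT⟩ := CBaux.defect_finset A.F A.hdetF A.Rdef
  -- THE key pointwise strain consistency estimate
  have hkey : ∀ N : ℕ, 0 < N → ∀ y x : Vec d, ‖x - y‖ ≤ d * (N:ℝ)⁻¹ →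
      ‖A.Deps N U q y - A.cbStrain U q x‖ ≤ Cst * (N:ℝ)⁻¹ := by
    intro N hN y x hxy
    have hNR : (0:ℝ) < N := by exact_mod_cast hN
    set ε : ℝ := (N:ℝ)⁻¹ with hεdef
    have hε : 0 < ε := by positivity
    have hNε : (N:ℝ) * ε = 1 := mul_inv_cancel₀ (ne_of_gt hNR)
    rw [pi_norm_le_iff_of_nonneg (by positivity)]
    intro e
    set v : Vec d := latpos A.F e.1.1 with hvdef
    set α : Fin S := e.1.2.1
    set β : Fin S := e.1.2.2
    have hsmul : ∀ w : Vec n, (N:ℝ) • (ε • w) = w := by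
      intro w; rw [smul_smul, hNε, one_smul]
    have happ : (A.Deps N U q y - A.cbStrain U q x) e
        = A.Deps N U q y e - A.cbStrain U q x e := rfl
    have hDeps : A.Deps N U q y e
        = (N:ℝ) • (U (y + ε • v) - U y) + q β (y + ε • v) - q α y := by
      show (N:ℝ) • ((U (y + ε • v) + ε • q β (y + ε • v)) - (U y + ε • q α y)) = _
      simp only [smul_sub, smul_add, hsmul]
      abel
    have hcb : A.cbStrain U q x e = F1 x v + q β x - q α x := rfl
    -- Taylor estimate for the U-part
    have taylor : ‖U (y + ε • v) - U y - F1 y (ε • v)‖ ≤ M2 * ‖ε • v‖ * ‖ε • v‖ := by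
      have hlip' : ∀ a b : Vec d, ‖fderiv ℝ U b - fderiv ℝ U a‖ ≤ M2 * ‖b - a‖ :=
        fun a b => hF1lip a b
      exact CBaux.taylor_bound hUdiff hM2n hlip' y (ε • v)
    -- assemble the four contributions
    have hεv : ‖ε • v‖ = ε * ‖v‖ := by
      rw [norm_smul, Real.norm_eq_abs, abs_of_nonneg hε.le]
    have hvRm : ‖v‖ ≤ Rm := hRm e
    have hT1 : ‖(N:ℝ) • (U (y + ε • v) - U y) - F1 y v‖ ≤ M2 * Rm * Rm * ε := by
      have heq : (N:ℝ) • (U (y + ε • v) - U y - F1 y (ε • v))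
          = (N:ℝ) • (U (y + ε • v) - U y) - F1 y v := by
        rw [smul_sub, ContinuousLinearMap.map_smul, hsmul]
      rw [← heq, norm_smul, Real.norm_eq_abs, abs_of_nonneg hNR.le]
      calc (N:ℝ) * ‖U (y + ε • v) - U y - F1 y (ε • v)‖
          ≤ (N:ℝ) * (M2 * ‖ε • v‖ * ‖ε • v‖) :=
            mul_le_mul_of_nonneg_left taylor hNR.le
      _ = M2 * (‖v‖ * ‖v‖) * ((N:ℝ) * ε) * ε := by rw [hεv]; ring
      _ = M2 * (‖v‖ * ‖v‖) * ε := by rw [hNε]; ring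
      _ ≤ M2 * (Rm * Rm) * ε := by
          apply mul_le_mul_of_nonneg_right ?_ hε.le
          exact mul_le_mul_of_nonneg_left
            (mul_self_le_mul_self (norm_nonneg v) hvRm) hM2n
      _ = M2 * Rm * Rm * ε := by ring
    have hT2 : ‖F1 y v - F1 x v‖ ≤ M2 * d * Rm * ε := by
      have : F1 y v - F1 x v = (F1 y - F1 x) v := rfl
      rw [this]
      calc ‖(F1 y - F1 x) v‖ ≤ ‖F1 y - F1 x‖ * ‖v‖ := (F1 y - F1 x).le_opNorm v
      _ ≤ (M2 * ‖y - x‖) * Rm := by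
          apply mul_le_mul (hF1lip x y) hvRm (norm_nonneg _)
          positivity
      _ ≤ (M2 * (d * ε)) * Rm := by
          have hyx : ‖y - x‖ ≤ d * ε := by rwa [norm_sub_rev]
          apply mul_le_mul_of_nonneg_right ?_ hRm0
          exact mul_le_mul_of_nonneg_left hyx hM2n
      _ = M2 * d * Rm * ε := by ring
    have hT3 : ‖q β (y + ε • v) - q β x‖ ≤ LqS * (d + Rm) * ε := by
      calc ‖q β (y + ε • v) - q β x‖ ≤ LqS * ‖y + ε • v - x‖ := hqlip β x (y + ε • v)
      _ ≤ LqS * (d * ε + ε * ‖v‖) := by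
          apply mul_le_mul_of_nonneg_left ?_ hLqS0
          have : y + ε • v - x = (y - x) + ε • v := by abel
          rw [this]
          calc ‖(y - x) + ε • v‖ ≤ ‖y - x‖ + ‖ε • v‖ := norm_add_le _ _
          _ ≤ d * ε + ε * ‖v‖ := by
              rw [hεv]
              have hyx : ‖y - x‖ ≤ d * ε := by rwa [norm_sub_rev]
              linarith
      _ ≤ LqS * (d * ε + ε * Rm) := by
          apply mul_le_mul_of_nonneg_left ?_ hLqS0
          exact add_le_add_right (mul_le_mul_of_nonneg_left hvRm hε.le) _
      _ = LqS * (d + Rm) * ε := by ring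
    have hT4 : ‖q α x - q α y‖ ≤ LqS * d * ε := by
      calc ‖q α x - q α y‖ ≤ LqS * ‖x - y‖ := hqlip α y x
      _ ≤ LqS * (d * ε) := mul_le_mul_of_nonneg_left hxy hLqS0
      _ = LqS * d * ε := by ring
    rw [happ, hDeps, hcb]
    have decomp : (N:ℝ) • (U (y + ε • v) - U y) + q β (y + ε • v) - q α y
        - (F1 x v + q β x - q α x)
        = ((N:ℝ) • (U (y + ε • v) - U y) - F1 y v) + (F1 y v - F1 x v)
          + (q β (y + ε • v) - q β x) + (q α x - q α y) := by abel
    rw [decomp]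
    calc ‖_ + _ + _ + _‖ ≤ ‖((N:ℝ) • (U (y + ε • v) - U y) - F1 y v) + (F1 y v - F1 x v)
          + (q β (y + ε • v) - q β x)‖ + ‖q α x - q α y‖ := norm_add_le _ _
    _ ≤ (‖((N:ℝ) • (U (y + ε • v) - U y) - F1 y v) + (F1 y v - F1 x v)‖
          + ‖q β (y + ε • v) - q β x‖) + ‖q α x - q α y‖ := by
        apply add_le_add_left (norm_add_le _ _)
    _ ≤ ((‖(N:ℝ) • (U (y + ε • v) - U y) - F1 y v‖ + ‖F1 y v - F1 x v‖)
          + ‖q β (y + ε • v) - q β x‖) + ‖q α x - q α y‖ := by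
        apply add_le_add_left (add_le_add_left (norm_add_le _ _) _)
    _ ≤ ((M2 * Rm * Rm * ε + M2 * d * Rm * ε) + LqS * (d + Rm) * ε) + LqS * d * ε := by
        apply add_le_add (add_le_add (add_le_add hT1 hT2) hT3) hT4
    _ = Cst * ε := by rw [hCstdef]; ring
  -- the constant
  refine ⟨T.card * (Cs + Cv) + Cv * Cst, ?_⟩
  intro N hN
  have hNR : (0:ℝ) < N := by exact_mod_cast hN
  set ε : ℝ := (N:ℝ)⁻¹ with hεdef
  have hε : 0 < ε := by positivity
  have hε1 : ε ≤ 1 := by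
    rw [hεdef]
    apply inv_le_one_of_one_le₀
    exact_mod_cast hN
  have hNε : (N:ℝ) * ε = 1 := mul_inv_cancel₀ (ne_of_gt hNR)
  set X : ZLat d → (↥A.R → Vec n) := fun z => A.yvec + A.Deps N U q (gridPt N z) with hXdef
  set φ : ZLat d → ℝ := fun z => A.Vhom (X z) - A.Vhom A.yvec with hφdef
  set h : Vec d → ℝ := fun x => A.Vhom (A.yvec + A.cbStrain U q x) - A.Vhom A.yvec with hhdef
  -- continuity of the integrand
  have hcbcont : Continuous (fun x => A.yvec + A.cbStrain U q x) := by
    apply continuous_pi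
    intro e
    have heq : (fun x => (A.yvec + A.cbStrain U q x) e)
        = fun x => A.yvec e + (F1 x (latpos A.F e.1.1) + q e.1.2.2 x - q e.1.2.1 x) := rfl
    rw [heq]
    apply continuous_const.add
    apply Continuous.sub ?_ ((hq e.1.2.1).continuous)
    apply Continuous.add ?_ ((hq e.1.2.2).continuous)
    exact ((ContinuousLinearMap.apply ℝ (Vec n) (latpos A.F e.1.1)).continuous).comp
      hF1.continuous
  have hhcont : Continuous h := (A.hVhom_smooth.continuous.comp hcbcont).sub continuous_const
  -- integrability on the cells
  have hint : ∀ z : ZLat d, MeasureTheory.IntegrableOn h (CBcell d N z) := by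
    intro z
    have hb : Bornology.IsBounded (CBcell d N z) := by
      apply Bornology.IsBounded.subset (Metric.isBounded_closedBall
        (x := gridPt N z) (r := d * ε))
      intro x hx
      rw [Metric.mem_closedBall, dist_eq_norm]
      exact dist_gridPt_CBcell hN hx
    exact ((hhcont.continuousOn).integrableOn_compact hb.isCompact_closure).mono_set
      subset_closure
  have hvol : ∀ z : ZLat d, MeasureTheory.volume (CBcell d N z) = ENNReal.ofReal (ε^d) :=
    fun z => volume_CBcell hN z
  have hvolfin : ∀ z : ZLat d, MeasureTheory.volume (CBcell d N z) < ⊤ := by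
    intro z; rw [hvol z]; exact ENNReal.ofReal_lt_top
  -- per-cell estimate
  have hcell_est : ∀ z ∈ gridSet d N,
      |ε^d * φ z - ∫ x in CBcell d N z, h x| ≤ Cv * Cst * ε * ε^d := by
    intro z hz
    have heq : ε^d * φ z = ∫ _x in CBcell d N z, φ z := by
      rw [MeasureTheory.setIntegral_const, MeasureTheory.measureReal_def, hvol z, ENNReal.toReal_ofReal (by positivity),
        smul_eq_mul]
    have hconst : MeasureTheory.IntegrableOn (fun _x : Vec d => φ z) (CBcell d N z) := by
      rw [MeasureTheory.integrableOn_const_iff]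
      exact Or.inr (hvolfin z)
    rw [heq, ← MeasureTheory.integral_sub hconst (hint z)]
    have hbound : ∀ x ∈ CBcell d N z, ‖φ z - h x‖ ≤ Cv * Cst * ε := by
      intro x hx
      have h1 : φ z - h x = A.Vhom (X z) - A.Vhom (A.yvec + A.cbStrain U q x) := by
        rw [hφdef, hhdef]; ring
      rw [Real.norm_eq_abs, h1, ← Real.norm_eq_abs]
      calc ‖A.Vhom (X z) - A.Vhom (A.yvec + A.cbStrain U q x)‖
          ≤ Cv * ‖X z - (A.yvec + A.cbStrain U q x)‖ := hVlip _ _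
      _ ≤ Cv * (Cst * ε) := by
          apply mul_le_mul_of_nonneg_left ?_ hCv_nonneg
          have h2 : X z - (A.yvec + A.cbStrain U q x)
              = A.Deps N U q (gridPt N z) - A.cbStrain U q x := by
            rw [hXdef]
            exact add_sub_add_left_eq_sub _ _ _
          rw [h2]
          exact hkey N hN (gridPt N z) x (dist_gridPt_CBcell hN hx)
      _ = Cv * Cst * ε := by ring
    have hmeas : MeasureTheory.AEStronglyMeasurable (fun x => φ z - h x)
        (MeasureTheory.volume.restrict (CBcell d N z)) :=
      ((continuous_const.sub hhcont).aestronglyMeasurable).restrict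
    have := MeasureTheory.norm_setIntegral_le_of_norm_le_const (μ := MeasureTheory.volume)
      (s := CBcell d N z) (f := fun x => φ z - h x) (hvolfin z) hbound
    rw [Real.norm_eq_abs] at this
    calc |∫ x in CBcell d N z, (φ z - h x)| ≤ Cv * Cst * ε
        * (MeasureTheory.volume (CBcell d N z)).toReal := this
    _ = Cv * Cst * ε * ε^d := by
        rw [hvol z, ENNReal.toReal_ofReal (by positivity)]
  -- decomposition of the continuum energy
  have hEc : A.EcΩ U q = ∑ z ∈ gridSet d N, ∫ x in CBcell d N z, h x := by
    show (∫ x in cubeΩ d, (A.Vhom (A.yvec + A.cbStrain U q x) - A.Vhom A.yvec)) = _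
    rw [cube_eq_biUnion_CBcell hN]
    exact MeasureTheory.integral_biUnion_finset (gridSet d N)
      (fun z _ => measurableSet_CBcell d N z) (CBcell_disjoint hN) (fun z _ => hint z)
  -- decomposition of the atomistic energy
  have hEa : A.Eaeps N U q
      = ε^d * (∑ z ∈ gridSet d N, (A.Vsite z (X z) - A.Vhom (X z)))
        + ∑ z ∈ gridSet d N, ε^d * φ z := by
    show ε^d * ∑ z ∈ gridSet d N, (A.Vsite z (X z) - A.Vhom A.yvec) = _
    rw [Finset.mul_sum, Finset.mul_sum, ← Finset.sum_add_distrib]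
    apply Finset.sum_congr rfl
    intro z _
    rw [hφdef]
    ring
  -- the defect term
  have hdef : |ε^d * ∑ z ∈ gridSet d N, (A.Vsite z (X z) - A.Vhom (X z))|
      ≤ T.card * (Cs + Cv) * ε := by
    rw [abs_mul, abs_of_nonneg (by positivity : (0:ℝ) ≤ ε^d)]
    have hsum : |∑ z ∈ gridSet d N, (A.Vsite z (X z) - A.Vhom (X z))|
        ≤ T.card * (Cs + Cv) := by
      calc |∑ z ∈ gridSet d N, (A.Vsite z (X z) - A.Vhom (X z))|
          ≤ ∑ z ∈ gridSet d N, |A.Vsite z (X z) - A.Vhom (X z)| :=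
            Finset.abs_sum_le_sum_abs _ _
      _ ≤ ∑ z ∈ gridSet d N, if z ∈ T then (Cs + Cv) else 0 := by
          apply Finset.sum_le_sum
          intro z _
          by_cases hzT : z ∈ T
          · rw [if_pos hzT]
            calc |A.Vsite z (X z) - A.Vhom (X z)|
                ≤ |A.Vsite z (X z)| + |A.Vhom (X z)| := abs_sub _ _
            _ ≤ Cs + Cv := add_le_add (hVsbound z _) (hVbound _)
          · rw [if_neg hzT]
            have hfar : A.Rdef ≤ ‖latpos A.F z‖ := by
              by_contra hcon
              push_neg at hcon
              exact hzT (hT z hcon)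
            rw [A.hVsite_hom z hfar]
            simp
      _ = ∑ z ∈ (gridSet d N).filter (· ∈ T), (Cs + Cv) := by
          rw [Finset.sum_filter]
      _ = ((gridSet d N).filter (· ∈ T)).card * (Cs + Cv) := by
          rw [Finset.sum_const, nsmul_eq_mul]
      _ ≤ T.card * (Cs + Cv) := by
          apply mul_le_mul_of_nonneg_right ?_ (by positivity)
          have hsub : (gridSet d N).filter (· ∈ T) ⊆ T := by
            intro z hz
            exact (Finset.mem_filter.mp hz).2
          exact_mod_cast Nat.cast_le.mpr (Finset.card_le_card hsub)
    calc ε^d * |∑ z ∈ gridSet d N, (A.Vsite z (X z) - A.Vhom (X z))|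
        ≤ ε^d * (T.card * (Cs + Cv)) := mul_le_mul_of_nonneg_left hsum (by positivity)
    _ ≤ ε * (T.card * (Cs + Cv)) := by
        apply mul_le_mul_of_nonneg_right ?_ (by positivity)
        calc ε^d ≤ ε^1 := pow_le_pow_of_le_one hε.le hε1 hd1
        _ = ε := pow_one ε
    _ = T.card * (Cs + Cv) * ε := by ring
  -- the bulk term
  have hbulk : |∑ z ∈ gridSet d N, ε^d * φ z - ∑ z ∈ gridSet d N, ∫ x in CBcell d N z, h x|
      ≤ Cv * Cst * ε := by
    rw [← Finset.sum_sub_distrib]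
    calc |∑ z ∈ gridSet d N, (ε^d * φ z - ∫ x in CBcell d N z, h x)|
        ≤ ∑ z ∈ gridSet d N, |ε^d * φ z - ∫ x in CBcell d N z, h x| :=
          Finset.abs_sum_le_sum_abs _ _
    _ ≤ ∑ _z ∈ gridSet d N, Cv * Cst * ε * ε^d := Finset.sum_le_sum hcell_est
    _ = (gridSet d N).card * (Cv * Cst * ε * ε^d) := by
        rw [Finset.sum_const, nsmul_eq_mul]
    _ = (N:ℝ)^d * ε^d * (Cv * Cst * ε) := by
        rw [card_gridSet]
        push_cast
        ring
    _ = Cv * Cst * ε := by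
        have : (N:ℝ)^d * ε^d = 1 := by
          rw [← mul_pow, hNε, one_pow]
        rw [this, one_mul]
  -- conclusion
  calc |A.Eaeps N U q - A.EcΩ U q|
      = |ε^d * (∑ z ∈ gridSet d N, (A.Vsite z (X z) - A.Vhom (X z)))
          + (∑ z ∈ gridSet d N, ε^d * φ z - ∑ z ∈ gridSet d N, ∫ x in CBcell d N z, h x)| := by
        rw [hEa, hEc]; ring_nf
  _ ≤ |ε^d * (∑ z ∈ gridSet d N, (A.Vsite z (X z) - A.Vhom (X z)))|
        + |∑ z ∈ gridSet d N, ε^d * φ z - ∑ z ∈ gridSet d N, ∫ x in CBcell d N z, h x| :=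
      abs_add_le _ _
  _ ≤ T.card * (Cs + Cv) * ε + Cv * Cst * ε := add_le_add hdef hbulk
  _ = (T.card * (Cs + Cv) + Cv * Cst) * ε := by ring
end
end
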